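/- Let n ≥ 1 and set k = (n−1)/2 if n is odd and k = n/2 if n is even. For all x = (x_1,…,x_n) ∈ ℝ^n, the antisymmetric multivariate cosine function satisfies cos⁻_{ρ₁}(x) = (−1)^k · 2^{(n−1)²} · ∏_{1 ≤ i < j ≤ n} sin(π(x_i + x_j)/2) · sin(π(x_i − x_j)/2), where ρ₁ = (n−1, n−2, …, 1, 0). -/

import Mathlib

open Real Finset

section Cheb
open Polynomial Polynomial.Chebyshev

lemma chebDeg' : ∀ m : ℕ, (T ℝ m).natDegree = m ∧ (T ℝ m).leadingCoeff = 2 ^ (m - 1) := by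
  intro m
  induction m using Nat.strong_induction_on with
  | _ m ih =>
    match m with
    | 0 => simp [T_zero]
    | 1 => simp [T_one]
    | 2 =>
      have e : ((2:ℕ):ℤ) = 2 := rfl
      constructor
      · rw [e, T_two]; compute_degree!
      · have h : (T ℝ ((2:ℕ):ℤ)).natDegree = 2 := by rw [e, T_two]; compute_degree!
        rw [Polynomial.leadingCoeff, h, e, T_two]
        simp [coeff_X_pow, coeff_one]
    | (m+3) =>
      have h1 := ih (m+2) (by omega)
      have h2 := ih (m+1) (by omega)
      have hT2 : (T ℝ (↑(m+2):ℤ)) ≠ 0 := by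
        intro h
        exact absurd h1.1 (by rw [h]; simp)
      have hrec : T ℝ (↑(m+3) : ℤ) = 2 * X * T ℝ (↑(m+2) : ℤ) - T ℝ (↑(m+1) : ℤ) := by
        have h := T_add_two ℝ ((m:ℤ)+1)
        have e : (m:ℤ)+1+2 = (m:ℤ)+3 := by ring
        have e2 : (m:ℤ)+1+1 = (m:ℤ)+2 := by ring
        rw [e, e2] at h
        push_cast
        linear_combination h
      have h2X : (2 * X : ℝ[X]).natDegree = 1 := by compute_degree!
      have hA : ((2 * X : ℝ[X]) * T ℝ (↑(m+2))).natDegree = m + 3 := by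
        rw [natDegree_mul (mul_ne_zero two_ne_zero X_ne_zero) hT2, h2X, h1.1]; omega
      have hAl : ((2*X : ℝ[X]) * T ℝ (↑(m+2))).leadingCoeff = 2 ^ (m+2) := by
        have hc : (2*X:ℝ[X]) = C 2 * X := by rw [(map_ofNat Polynomial.C 2).symm]
        rw [leadingCoeff_mul, h1.2, hc, leadingCoeff_C_mul_X,
          show m+2-1 = m+1 from rfl]
        ring
      have hlt : (T ℝ (↑(m+1):ℤ)).natDegree < ((2*X : ℝ[X])*T ℝ (↑(m+2))).natDegree := by
        rw [hA, h2.1]; omega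
      refine ⟨?_, ?_⟩
      · rw [hrec, natDegree_sub_eq_left_of_natDegree_lt hlt, hA]
      · rw [hrec, Polynomial.leadingCoeff, natDegree_sub_eq_left_of_natDegree_lt hlt, hA,
          coeff_sub, coeff_eq_zero_of_natDegree_lt (p := T ℝ (↑(m+1):ℤ)) (by rw [h2.1]; omega),
          sub_zero, show m+3-1 = m+2 from rfl, ← hA, coeff_natDegree, hAl]

end Cheb

section Aux
open Polynomial

noncomputable def qq (j : ℕ) : ℝ[X] :=
  C (((2:ℝ)^(j-1))⁻¹) * Polynomial.Chebyshev.T ℝ j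

lemma qq_deg (j : ℕ) : (qq j).natDegree = j := by
  rw [qq, natDegree_C_mul (inv_ne_zero (by positivity)), (chebDeg' j).1]

lemma qq_monic (j : ℕ) : (qq j).Monic := by
  unfold Polynomial.Monic
  rw [qq, leadingCoeff_mul, leadingCoeff_C, (chebDeg' j).2]
  rw [inv_mul_cancel₀ (by positivity)]

lemma qq_eval (j : ℕ) (t : ℝ) :
    (qq j).eval (Real.cos t) = ((2:ℝ)^(j-1))⁻¹ * Real.cos (j * t) := by
  rw [qq, eval_mul, eval_C, Polynomial.Chebyshev.T_real_cos]
  push_cast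
  ring_nf

end Aux


lemma signRev (n : ℕ) :
    ((Equiv.Perm.sign (Fin.revPerm : Equiv.Perm (Fin n)) : ℤ) : ℝ)
      = (-1) ^ (∑ i : Fin n, (Finset.Ioi i).card) := by
  set v : Fin n → ℝ := fun i => ((i : ℕ) : ℝ) with hv
  have hinj : Function.Injective v := fun a b h => by apply Fin.ext; simp only [hv] at h; exact_mod_cast h
  have hne : (Matrix.vandermonde v).det ≠ 0 := Matrix.det_vandermonde_ne_zero_iff.mpr hinj
  have h1 := Matrix.det_permute (Fin.revPerm) (Matrix.vandermonde v)
  have h2 : ((Matrix.vandermonde v).submatrix Fin.revPerm id)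
      = Matrix.vandermonde (fun i => v (Fin.rev i)) := by
    ext i j; simp [Matrix.vandermonde, Matrix.submatrix]
  rw [h2, Matrix.det_vandermonde, Matrix.det_vandermonde] at h1
  have h3 : ∀ i : Fin n, ∀ j ∈ Finset.Ioi i,
      v (Fin.rev j) - v (Fin.rev i) = (-1) * (v j - v i) := by
    intro i j _
    simp only [hv, Fin.val_rev]
    have hi : (i : ℕ) + 1 ≤ n := i.isLt
    have hj : (j : ℕ) + 1 ≤ n := j.isLt
    push_cast [Nat.cast_sub hi, Nat.cast_sub hj]
    ring
  rw [Finset.prod_congr rfl (fun i _ => Finset.prod_congr rfl (h3 i))] at h1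
  simp only [Finset.prod_mul_distrib, Finset.prod_const] at h1
  rw [Finset.prod_pow_eq_pow_sum] at h1
  rw [Matrix.det_vandermonde] at hne
  exact (mul_right_cancel₀ hne h1).symm

/-- The antisymmetric multivariate cosine function
`cos⁻_λ(x) = Σ_{σ ∈ S_n} sgn(σ) ∏_{i=1}^n cos(π λ_{σ(i)} x_i)`. -/
noncomputable def cosMinus (n : ℕ) (lam x : Fin n → ℝ) : ℝ :=
  ∑ σ : Equiv.Perm (Fin n),
    ((Equiv.Perm.sign σ : ℤ) : ℝ) * ∏ i : Fin n, Real.cos (Real.pi * lam (σ i) * x i)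

section Main
open Polynomial
theorem antisymmetric_cos_rho1 (n : ℕ) (hn : 1 ≤ n) (k : ℕ)
    (hk : (Odd n → 2 * k + 1 = n) ∧ (Even n → 2 * k = n)) (x : Fin n → ℝ) :
    cosMinus n (fun i => (n : ℝ) - 1 - ((i : ℕ) : ℝ)) x
      = (-1 : ℝ) ^ k * (2 : ℝ) ^ ((n - 1) ^ 2) *
        ∏ i : Fin n, ∏ j ∈ Finset.Ioi i,
          Real.sin (Real.pi * (x i + x j) / 2) * Real.sin (Real.pi * (x i - x j) / 2) := by
  set y : Fin n → ℝ := fun i => Real.cos (Real.pi * x i) with hy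
  set N : ℕ := ∑ i : Fin n, (Finset.Ioi i).card with hN
  set Nz : Matrix (Fin n) (Fin n) ℝ :=
    Matrix.of fun i j => Real.cos (Real.pi * ((n:ℝ)-1-((j:ℕ):ℝ)) * x i) with hNz
  -- Step A : cosMinus = det Nzᵀ
  have stepA : cosMinus n (fun i => (n : ℝ) - 1 - ((i : ℕ) : ℝ)) x = Nz.transpose.det := by
    rw [Matrix.det_apply']
    rfl
  -- Step B : column-reversed matrix
  set W : Matrix (Fin n) (Fin n) ℝ :=
    Matrix.of fun i j => ((2:ℝ)^((j:ℕ)-1)) * (qq (j:ℕ)).eval (y i) with hW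
  have hNW : Nz.submatrix id Fin.revPerm = W := by
    ext i j
    have hrev : ((Fin.rev j : ℕ) : ℝ) = (n:ℝ) - 1 - ((j:ℕ):ℝ) := by
      rw [Fin.val_rev]
      have hj : (j : ℕ) + 1 ≤ n := j.isLt
      push_cast [Nat.cast_sub hj]
      ring
    simp only [Matrix.submatrix_apply, hNz, hW, Matrix.of_apply,
      Fin.revPerm_apply, id_eq, hrev, hy, qq_eval]
    rw [show (n:ℝ) - 1 - ((n:ℝ) - 1 - ((j:ℕ):ℝ)) = ((j:ℕ):ℝ) by ring,
      mul_inv_cancel_left₀ (by positivity)]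
    ring_nf
  have hperm := Matrix.det_permute' (Fin.revPerm) Nz
  rw [hNW, signRev, ← hN] at hperm
  -- det W
  have hdetW : W.det = (∏ j : Fin n, ((2:ℝ)^((j:ℕ)-1))) *
      (Matrix.of fun (i j : Fin n) => (qq (j:ℕ)).eval (y i)).det := by
    rw [hW]
    exact Matrix.det_mul_row (fun j : Fin n => ((2:ℝ)^((j:ℕ)-1))) _
  have hvdm : (Matrix.of fun (i j : Fin n) => (qq (j:ℕ)).eval (y i)).det
      = ∏ i : Fin n, ∏ j ∈ Finset.Ioi i, (y j - y i) := by
    rw [← Matrix.det_eval_matrixOfPolynomials_eq_det_vandermonde y (fun j => qq (j:ℕ))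
      (fun j => qq_deg j) (fun j => qq_monic j), Matrix.det_vandermonde]
  -- sines
  have key : ∀ i j : Fin n, y j - y i
      = 2 * (Real.sin (Real.pi*(x i + x j)/2) * Real.sin (Real.pi*(x i - x j)/2)) := by
    intro i j
    rw [hy]
    simp only
    rw [Real.cos_sub_cos,
      show Real.pi*x j - Real.pi*x i = -(Real.pi*(x i - x j)) by ring,
      show Real.pi*x j + Real.pi*x i = Real.pi*(x i + x j) by ring,
      neg_div, Real.sin_neg]
    ring
  have hsines : (∏ i : Fin n, ∏ j ∈ Finset.Ioi i, (y j - y i))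
      = (2:ℝ)^N * ∏ i : Fin n, ∏ j ∈ Finset.Ioi i,
          Real.sin (Real.pi * (x i + x j) / 2) * Real.sin (Real.pi * (x i - x j) / 2) := by
    rw [Finset.prod_congr rfl (fun i _ => Finset.prod_congr rfl (fun j _ => key i j))]
    simp only [Finset.prod_mul_distrib, Finset.prod_const]
    rw [Finset.prod_pow_eq_pow_sum]
  -- constants
  have hNval : N = ∑ j ∈ Finset.range n, (n - 1 - j) := by
    rw [hN]
    simp only [Fin.card_Ioi]
    exact Fin.sum_univ_eq_sum_range (fun i => n - 1 - i) n
  have hN2 : 2 * N = n * (n - 1) := by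
    rw [hNval, show (∑ j ∈ Finset.range n, (n - 1 - j)) = ∑ j ∈ Finset.range n, j from
      Finset.sum_range_reflect (fun j => j) n, mul_comm]
    exact Finset.sum_range_id_mul_two n
  have h2NW : (∏ j : Fin n, ((2:ℝ)^((j:ℕ)-1))) * (2:ℝ)^N = (2:ℝ)^((n-1)^2) := by
    rw [Finset.prod_pow_eq_pow_sum, ← pow_add]
    congr 1
    have hsum : (∑ j : Fin n, ((j:ℕ)-1)) = ∑ j ∈ Finset.range n, (j-1) :=
      Fin.sum_univ_eq_sum_range (fun j => j - 1) n
    rw [hsum, hNval]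
    obtain ⟨m, rfl⟩ : ∃ m, n = m + 1 := ⟨n - 1, by omega⟩
    rw [← Finset.sum_add_distrib, Finset.sum_range_succ' (fun j => (j - 1) + (m + 1 - 1 - j)) m]
    rw [Finset.sum_congr rfl (fun j hj => show (j + 1 - 1) + (m + 1 - 1 - (j+1)) = m - 1 by
      have := Finset.mem_range.mp hj; omega)]
    rw [Finset.sum_const, Finset.card_range, smul_eq_mul]
    cases m with
    | zero => rfl
    | succ m => simp only [Nat.succ_sub_one, Nat.add_sub_cancel, Nat.zero_sub, Nat.sub_zero]; ring
  have hpar : N % 2 = k % 2 := by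
    rcases Nat.even_or_odd n with he | ho
    · have hk2 := hk.2 he
      have hNk : N = k * (n - 1) := by
        have : 2 * N = 2 * (k * (n - 1)) := by rw [hN2, ← hk2]; ring
        omega
      have hn1 : (n - 1) % 2 = 1 := by omega
      rw [hNk, Nat.mul_mod, hn1, mul_one]
      omega
    · have hk1 := hk.1 ho
      have hNk : N = n * k := by
        have : 2 * N = 2 * (n * k) := by rw [hN2, show n - 1 = 2 * k by omega]; ring
        omega
      have hn1 : n % 2 = 1 := by omega
      rw [hNk, Nat.mul_mod, hn1, one_mul]
      omega
  have hsign : ((-1:ℝ))^N = (-1)^k := by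
    rcases Nat.even_or_odd k with hek | hok
    · have heN : Even N := Nat.even_iff.mpr (by rw [hpar]; exact Nat.even_iff.mp hek)
      rw [heN.neg_one_pow, hek.neg_one_pow]
    · have hoN : Odd N := Nat.odd_iff.mpr (by rw [hpar]; exact Nat.odd_iff.mp hok)
      rw [hoN.neg_one_pow, hok.neg_one_pow]
  -- assemble
  rw [stepA, Matrix.det_transpose]
  have hsq : ((-1:ℝ))^N * ((-1:ℝ))^N = 1 := by
    rw [← pow_add]
    exact Even.neg_one_pow ⟨N, rfl⟩
  have hfin : Nz.det = (-1:ℝ)^N * W.det := by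
    rw [hperm, show ((-1:ℝ))^N * ((-1:ℝ)^N * Nz.det) = ((-1:ℝ)^N * (-1:ℝ)^N) * Nz.det from by ring,
      hsq, one_mul]
  rw [hfin, hdetW, hvdm, hsines, hsign]
  linear_combination ((-1:ℝ)^k * ∏ i : Fin n, ∏ j ∈ Finset.Ioi i,
    Real.sin (Real.pi * (x i + x j) / 2) * Real.sin (Real.pi * (x i - x j) / 2)) * h2NW

end Main
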